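/- arXiv:1601.05761 — 2 statements merged into one kernel-verified Lean document; each statement's English description precedes it below -/
import Mathlib

section
/- Let μ ∈ M(𝕋^d) and let Λ ⊂ ℤ^d be a finite subset. If φ ∈ U satisfies ⟨φ,μ⟩ = ε(μ,Λ), then for every minimal extrapolation ν ∈ 𝓔(μ,Λ): φ = sign(ν) ν-almost everywhere, and supp(ν) ⊂ {x ∈ 𝕋^d : |φ(x)| = 1}. -/
/- Setting: `M(𝕋^d)`, the space of complex bounded Radon measures on the `d`-dimensional
torus, is identified with the continuous dual of `C(𝕋^d, ℂ)` via the Riesz representation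
theorem; the total variation norm corresponds to the operator norm. -/

open MeasureTheory Complex Real

noncomputable section

attribute [local instance] ZeroLEOneClass.factZeroLtOne

/-- The `d`-dimensional torus `𝕋^d = (ℝ/ℤ)^d`. -/
abbrev Torus (d : ℕ) : Type := Fin d → AddCircle (1 : ℝ)

/-- The character `x ↦ e^{2πi m·x}` on the torus, for `m ∈ ℤ^d`. -/
def torusChar {d : ℕ} (m : Fin d → ℤ) : C(Torus d, ℂ) :=
  ⟨fun x => ∏ i, fourier (m i) (x i), by
    refine continuous_finsetProd _ fun i _ => ?_
    exact (map_continuous (fourier (m i))).comp (continuous_apply i)⟩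

/-- The space `M(𝕋^d)` of complex bounded Radon measures on the torus, identified (via the
Riesz representation theorem) with the continuous dual of `C(𝕋^d, ℂ)`; the total variation
norm is the operator norm. -/
abbrev TorusMeasure (d : ℕ) : Type := C(Torus d, ℂ) →L[ℂ] ℂ

/-- The Fourier coefficient `μ̂(m) = ∫_{𝕋^d} e^{-2πi m·x} dμ(x)`. -/
def mFourierCoeff {d : ℕ} (μ : TorusMeasure d) (m : Fin d → ℤ) : ℂ :=
  μ (torusChar (-m))

/-- `ν` is an extrapolation of `μ` from `Λ` if `ν̂ = μ̂` on `Λ`. -/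
def IsExtrapolation {d : ℕ} (μ : TorusMeasure d) (Λ : Finset (Fin d → ℤ))
    (ν : TorusMeasure d) : Prop :=
  ∀ m ∈ Λ, mFourierCoeff ν m = mFourierCoeff μ m

/-- `ε(μ,Λ) = inf {‖σ‖ : σ ∈ M(𝕋^d), σ̂ = μ̂ on Λ}`. -/
def minExtNorm {d : ℕ} (μ : TorusMeasure d) (Λ : Finset (Fin d → ℤ)) : ℝ :=
  sInf ((fun ν => ‖ν‖) '' {ν | IsExtrapolation μ Λ ν})

/-- `ν` is a minimal extrapolation of `μ` from `Λ`, i.e. `ν ∈ 𝓔(μ,Λ)`: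
an extrapolation whose total variation norm equals `ε(μ,Λ)`. -/
def IsMinimalExtrapolation {d : ℕ} (μ : TorusMeasure d) (Λ : Finset (Fin d → ℤ))
    (ν : TorusMeasure d) : Prop :=
  IsExtrapolation μ Λ ν ∧ ‖ν‖ = minExtNorm μ Λ

/-- `Γ(μ,Λ) = {m ∈ Λ : |μ̂(m)| = ε(μ,Λ)}`. -/
def gammaSet {d : ℕ} (μ : TorusMeasure d) (Λ : Finset (Fin d → ℤ)) : Set (Fin d → ℤ) :=
  {m | m ∈ Λ ∧ ‖mFourierCoeff μ m‖ = minExtNorm μ Λ}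

/-- The measure `ν` is supported in the set `S`: it annihilates every continuous
function vanishing on `S` (for closed `S` this says `supp(ν) ⊆ S`). -/
def SupportedIn {d : ℕ} (ν : TorusMeasure d) (S : Set (Torus d)) : Prop :=
  ∀ f : C(Torus d, ℂ), (∀ x ∈ S, f x = 0) → ν f = 0

/-- The pairing `⟨f,μ⟩ = ∫_{𝕋^d} f(x) conj(dμ(x)) = conj (μ (conj f))`. -/
def mPairing {d : ℕ} (f : C(Torus d, ℂ)) (μ : TorusMeasure d) : ℂ :=
  starRingEnd ℂ (μ (star f))

/-- `C(𝕋^d;Λ)`: the subspace of trigonometric polynomials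
`f(x) = ∑_{m ∈ Λ} a_m e^{2πi m·x}` with frequencies in `Λ`. -/
def trigPoly {d : ℕ} (Λ : Finset (Fin d → ℤ)) : Submodule ℂ C(Torus d, ℂ) :=
  Submodule.span ℂ (torusChar '' (Λ : Set (Fin d → ℤ)))

/-- For a continuous `g` with `‖g‖_∞ ≤ 1`, the assertion that `sign(ν) = g`
`ν`-almost everywhere, expressed through the standard equivalent condition
`⟨g,ν⟩ = ‖ν‖` (obtained by integrating the Radon–Nikodym identity
`∫ f d|ν| = ∫ f conj(sign ν) dν` against `f = conj g` and using `|ν|(𝕋^d) = ‖ν‖`). -/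
def SignEqAE {d : ℕ} (ν : TorusMeasure d) (g : C(Torus d, ℂ)) : Prop :=
  mPairing g ν = (‖ν‖ : ℂ)

/-- `ν` is a positive measure: it takes nonnegative real values on nonnegative real-valued
continuous functions. -/
def IsPositiveMeasure {d : ℕ} (ν : TorusMeasure d) : Prop :=
  ∀ f : C(Torus d, ℂ), (∀ x, (f x).im = 0 ∧ 0 ≤ (f x).re) → (ν f).im = 0 ∧ 0 ≤ (ν f).re

/-- The Dirac measure `δ_x`: evaluation at `x`. -/
def diracM {d : ℕ} (x : Torus d) : TorusMeasure d :=
  ContinuousMap.evalCLM ℂ x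

/-- The modulation `M_n ν`, defined by `d(M_n ν)(x) = e^{2πi n·x} dν(x)`. -/
def modulateM {d : ℕ} (n : Fin d → ℤ) (ν : TorusMeasure d) : TorusMeasure d :=
  ν.comp (ContinuousLinearMap.mul ℂ C(Torus d, ℂ) (torusChar n))


private lemma star_torusChar {d : ℕ} (m : Fin d → ℤ) :
    star (torusChar m) = torusChar (-m) := by
  ext x
  simp only [ContinuousMap.star_apply, torusChar, ContinuousMap.coe_mk, star_prod,
    Pi.neg_apply]
  refine Finset.prod_congr rfl fun i _ => ?_
  rw [fourier_neg]
  rfl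

private lemma mPairing_eq_of_ext {d : ℕ} (μ ν : TorusMeasure d) (Λ : Finset (Fin d → ℤ))
    (hext : IsExtrapolation μ Λ ν) (φ : C(Torus d, ℂ)) (hφ : φ ∈ trigPoly Λ) :
    mPairing φ ν = mPairing φ μ := by
  induction hφ using Submodule.span_induction with
  | mem f hfm =>
      obtain ⟨m, hm, rfl⟩ := hfm
      have h := hext m hm
      simp only [mPairing, star_torusChar]
      unfold mFourierCoeff at h
      rw [h]
  | zero => simp [mPairing]
  | add f g _ _ hf hg =>
      simp only [mPairing, star_add, map_add] at *
      rw [hf, hg]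
  | smul c f _ hf =>
      have h1 : ∀ σ : TorusMeasure d, mPairing (c • f) σ = c * mPairing f σ := by
        intro σ
        simp only [mPairing, star_smul]
        rw [ContinuousLinearMap.map_smul, smul_eq_mul, map_mul]
        simp
      rw [h1, h1, hf]

private lemma annihilates_of_attains {d : ℕ} (ν : TorusMeasure d) (g f : C(Torus d, ℂ))
    (hg : ‖g‖ ≤ 1) (hνg : ν g = (‖ν‖ : ℂ))
    (hf : ∀ x, ‖g x‖ = 1 → f x = 0) : ν f = 0 := by
  have hle : ∀ ε : ℝ, 0 < ε → ‖ν f‖ ≤ ε * ‖ν‖ := by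
    intro ε hε
    -- find δ > 0 such that ‖g x‖ > 1 - δ forces ‖f x‖ ≤ ε
    obtain ⟨δ, hδ, hδp⟩ : ∃ δ : ℝ, 0 < δ ∧ ∀ x, 1 - δ < ‖g x‖ → ‖f x‖ ≤ ε := by
      set S : Set (Torus d) := {x | ε ≤ ‖f x‖} with hS
      have hSc : IsClosed S := isClosed_le continuous_const f.continuous.norm
      rcases S.eq_empty_or_nonempty with hSe | hSn
      · refine ⟨1, one_pos, fun x _ => ?_⟩
        by_contra h
        push_neg at h
        have hx : x ∈ S := le_of_lt h
        rw [hSe] at hx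
        exact absurd hx (Set.notMem_empty x)
      · obtain ⟨x₀, hx₀, hmax⟩ := hSc.isCompact.exists_isMaxOn hSn
          (g.continuous.norm.continuousOn)
        have hfx₀ : f x₀ ≠ 0 := by
          intro h0
          have : ε ≤ ‖f x₀‖ := hx₀
          rw [h0, norm_zero] at this
          linarith
        have hgx₀lt : ‖g x₀‖ < 1 := by
          rcases lt_or_eq_of_le ((g.norm_coe_le_norm x₀).trans hg) with h | h
          · exact h
          · exact absurd (hf x₀ h) hfx₀
        refine ⟨1 - ‖g x₀‖, by linarith, fun x hx => ?_⟩
        have hxS : x ∉ S := by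
          intro hxS
          have := hmax hxS
          simp only [Set.mem_setOf_eq] at this
          have : ‖g x‖ ≤ ‖g x₀‖ := this
          linarith
        simp only [hS, Set.mem_setOf_eq, not_le] at hxS
        linarith
    by_cases h0 : ν f = 0
    · rw [h0, norm_zero]; positivity
    set r : ℝ := ‖ν f‖ with hr
    have hrpos : 0 < r := norm_pos_iff.mpr h0
    set c : ℂ := starRingEnd ℂ (ν f) / (r : ℂ) with hc
    have hcn : ‖c‖ = 1 := by
      have h1 : ‖(starRingEnd ℂ) (ν f)‖ = r := by rw [RCLike.norm_conj, hr]
      rw [hc, norm_div, h1, Complex.norm_real, Real.norm_of_nonneg hrpos.le,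
        div_self hrpos.ne']
    have hcmul : c * ν f = (r : ℂ) := by
      rw [hc, div_mul_eq_mul_div, mul_comm ((starRingEnd ℂ) (ν f)) (ν f), Complex.mul_conj',
        ← hr, pow_two, mul_div_assoc, div_self (by exact_mod_cast hrpos.ne' : (r:ℂ) ≠ 0),
        mul_one]
    set t : ℝ := δ / (‖f‖ + 1) with ht
    have htpos : 0 < t := by positivity
    have htf : t * ‖f‖ ≤ δ := by
      have h1 : t * (‖f‖ + 1) = δ := div_mul_cancel₀ _ (by positivity)
      nlinarith
    have hb : ‖g + ((t : ℂ) * c) • f‖ ≤ 1 + t * ε := by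
      rw [ContinuousMap.norm_le _ (by positivity)]
      intro x
      have hpt : ‖g x + ((t : ℂ) * c) • f x‖ ≤ ‖g x‖ + t * ‖f x‖ := by
        refine (norm_add_le _ _).trans ?_
        rw [norm_smul, norm_mul, hcn, mul_one, Complex.norm_real,
          Real.norm_of_nonneg htpos.le]
      simp only [ContinuousMap.add_apply, ContinuousMap.smul_apply]
      by_cases hgx : ‖g x‖ ≤ 1 - δ
      · have : t * ‖f x‖ ≤ t * ‖f‖ := by
          exact mul_le_mul_of_nonneg_left (f.norm_coe_le_norm x) htpos.le
        have := hpt.trans (by linarith : ‖g x‖ + t * ‖f x‖ ≤ 1)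
        nlinarith
      · push_neg at hgx
        have h1 : ‖f x‖ ≤ ε := hδp x hgx
        have h2 : ‖g x‖ ≤ 1 := (g.norm_coe_le_norm x).trans hg
        refine hpt.trans ?_
        nlinarith
    have hval : ν (g + ((t : ℂ) * c) • f) = ((‖ν‖ + t * r : ℝ) : ℂ) := by
      rw [map_add, ContinuousLinearMap.map_smul, smul_eq_mul, hνg, mul_assoc, hcmul]
      push_cast
      ring
    have hnorm2 : ‖ν (g + ((t : ℂ) * c) • f)‖ ≤ ‖ν‖ * (1 + t * ε) :=
      (ν.le_opNorm _).trans (mul_le_mul_of_nonneg_left hb (norm_nonneg ν))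
    rw [hval, Complex.norm_real, Real.norm_of_nonneg (by positivity)] at hnorm2
    nlinarith
  have : ‖ν f‖ ≤ 0 := by
    refine le_of_forall_pos_le_add (fun ε hε => ?_)
    have h := hle (ε / (‖ν‖ + 1)) (by positivity)
    have : ε / (‖ν‖ + 1) * ‖ν‖ ≤ ε := by
      rw [div_mul_eq_mul_div, div_le_iff₀ (by positivity)]
      nlinarith [norm_nonneg ν]
    linarith
  exact norm_le_zero_iff.mp this

/-- **Proposition 2.1(g).** If `φ ∈ U` and `⟨φ,μ⟩ = ε(μ,Λ)`, then for every minimal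
extrapolation `ν`: `φ = sign(ν)` `ν`-a.e., and `supp(ν) ⊆ {x : |φ(x)| = 1}`. -/
theorem pairing_eq_minExtNorm_sign_and_support {d : ℕ} (μ : TorusMeasure d)
    (Λ : Finset (Fin d → ℤ)) (φ : C(Torus d, ℂ)) (hφΛ : φ ∈ trigPoly Λ)
    (hφ1 : ‖φ‖ ≤ 1) (hφμ : mPairing φ μ = (minExtNorm μ Λ : ℂ)) :
    ∀ ν : TorusMeasure d, IsMinimalExtrapolation μ Λ ν →
      SignEqAE ν φ ∧ SupportedIn ν {x : Torus d | ‖φ x‖ = 1} := by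
  intro ν hν
  obtain ⟨hext, hnorm⟩ := hν
  have hpair : mPairing φ ν = (‖ν‖ : ℂ) := by
    rw [mPairing_eq_of_ext μ ν Λ hext φ hφΛ, hφμ, hnorm]
  refine ⟨hpair, ?_⟩
  intro f hf0
  have hg : ν (star φ) = (‖ν‖ : ℂ) := by
    have h := congrArg (starRingEnd ℂ) hpair
    simpa [mPairing] using h
  refine annihilates_of_attains ν (star φ) f (by rw [ContinuousMap.norm_le _ zero_le_one]; intro x; simpa using (φ.norm_coe_le_norm x).trans hφ1) hg (fun x hx => ?_)
  exact hf0 x (by simpa using hx)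

end
end

section
/- Let μ ∈ M(𝕋^d), let Λ ⊂ ℤ^d be a finite subset, and let n ∈ Λ. Suppose there exists a positive measure ν ∈ M(𝕋^d) such that ν̂(m) = μ̂(m + n) for all m ∈ Λ − n. Then n ∈ Γ(μ,Λ), i.e. |μ̂(n)| = ε(μ,Λ), and M_n ν is a minimal extrapolation of μ from Λ, where M_n ν is the measure defined by d(M_n ν)(x) = e^{2πi n·x} dν(x). -/
/- Setting: `M(𝕋^d)`, the space of complex bounded Radon measures on the `d`-dimensional
torus, is identified with the continuous dual of `C(𝕋^d, ℂ)` via the Riesz representation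
theorem; the total variation norm corresponds to the operator norm. -/

open MeasureTheory Complex Real

noncomputable section

section Aux

variable {d : ℕ}

lemma torusChar_norm_apply (m : Fin d → ℤ) (x : Torus d) : ‖torusChar m x‖ = 1 := by
  simp only [torusChar, ContinuousMap.coe_mk]
  rw [norm_prod]
  simp [Circle.norm_coe]

lemma torusChar_mul (m k : Fin d → ℤ) : torusChar m * torusChar k = torusChar (m + k) := by
  ext x
  simp only [torusChar, ContinuousMap.mul_apply, ContinuousMap.coe_mk, ← Finset.prod_mul_distrib]
  exact Finset.prod_congr rfl fun i _ => (fourier_add).symm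

lemma torusChar_zero : torusChar (0 : Fin d → ℤ) = 1 := by
  ext x
  simp [torusChar, fourier_zero]

lemma torusChar_norm_le (m : Fin d → ℤ) : ‖torusChar m‖ ≤ 1 :=
  ContinuousMap.norm_le _ zero_le_one |>.mpr fun x => le_of_eq (torusChar_norm_apply m x)

lemma pos_im_zero {ν : TorusMeasure d} (hpos : IsPositiveMeasure ν) (f : C(Torus d, ℂ))
    (hf : ∀ x, (f x).im = 0) : (ν f).im = 0 := by
  have h1 := hpos 1 (fun x => by simp)
  have hg := hpos (f + (‖f‖ : ℂ) • (1 : C(Torus d, ℂ))) (fun x => by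
    constructor
    · simp [hf x]
    · simp only [ContinuousMap.add_apply, ContinuousMap.smul_apply, ContinuousMap.one_apply,
        smul_eq_mul, mul_one, Complex.add_re, Complex.ofReal_re]
      have h2 : |(f x).re| ≤ ‖f x‖ := Complex.abs_re_le_norm (f x)
      have h3 : ‖f x‖ ≤ ‖f‖ := f.norm_coe_le_norm x
      have := (abs_le.mp (h2.trans h3)).1
      linarith)
  have hlin : ν (f + (‖f‖ : ℂ) • (1 : C(Torus d, ℂ))) = ν f + (‖f‖ : ℂ) * ν 1 := by
    rw [map_add, ν.map_smul]; simp
  rw [hlin] at hg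
  have : (ν f + (‖f‖ : ℂ) * ν 1).im = (ν f).im + ‖f‖ * (ν 1).im := by
    simp [Complex.add_im, Complex.mul_im]
  rw [this, h1.1] at hg
  simpa using hg.1

lemma pos_bound {ν : TorusMeasure d} (hpos : IsPositiveMeasure ν) (f : C(Torus d, ℂ)) :
    ‖ν f‖ ≤ (ν 1).re * ‖f‖ := by
  have h1 := hpos 1 (fun x => by simp)
  rcases eq_or_ne (ν f) 0 with hc | hc
  · rw [hc, norm_zero]; exact mul_nonneg h1.2 (norm_nonneg f)
  · set c := ν f with hcdef
    have hcn : (‖c‖ : ℂ) ≠ 0 := by simpa using norm_ne_zero_iff.mpr hc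
    set u : ℂ := starRingEnd ℂ c / ‖c‖ with hu
    have huc : u * c = (‖c‖ : ℂ) := by
      rw [hu, div_mul_eq_mul_div, Complex.conj_mul', pow_two, mul_div_assoc,
        div_self hcn, mul_one]
    have hun : ‖u‖ = 1 := by
      rw [hu, norm_div]
      simp only [RCLike.norm_conj]
      rw [Complex.norm_real, norm_norm, div_self (norm_ne_zero_iff.mpr hc)]
    set g : C(Torus d, ℂ) := u • f with hg
    have hgval : ∀ x, g x = u * f x := fun x => rfl
    have hgnorm : ∀ x, ‖g x‖ = ‖f x‖ := fun x => by rw [hgval, norm_mul, hun, one_mul]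
    have hνg : ν g = (‖c‖ : ℂ) := by rw [hg, ν.map_smul, smul_eq_mul, ← hcdef, huc]
    set p : C(Torus d, ℂ) := ⟨fun x => ((g x).re : ℂ),
      Complex.continuous_ofReal.comp (Complex.continuous_re.comp g.continuous)⟩ with hp
    set q : C(Torus d, ℂ) := ⟨fun x => ((g x).im : ℂ),
      Complex.continuous_ofReal.comp (Complex.continuous_im.comp g.continuous)⟩ with hq
    have hdecomp : g = p + Complex.I • q := by
      ext x
      simp only [ContinuousMap.add_apply, ContinuousMap.smul_apply, hp, hq,
        ContinuousMap.coe_mk, smul_eq_mul]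
      rw [mul_comm, Complex.re_add_im]
    have hpim : (ν p).im = 0 := pos_im_zero hpos p (fun x => by simp [hp])
    have hqim : (ν q).im = 0 := pos_im_zero hpos q (fun x => by simp [hq])
    have hνg2 : ν g = ν p + Complex.I * ν q := by
      rw [hdecomp, map_add, ν.map_smul, smul_eq_mul]
    have hre : ‖c‖ = (ν p).re := by
      have := congrArg Complex.re (hνg.symm.trans hνg2)
      simpa [Complex.add_re, Complex.mul_re, Complex.I_re, Complex.I_im, hqim] using this
    have hbound := hpos ((‖f‖ : ℂ) • (1 : C(Torus d, ℂ)) - p) (fun x => by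
      constructor
      · simp [hp]
      · simp only [ContinuousMap.sub_apply, ContinuousMap.smul_apply, ContinuousMap.one_apply,
          smul_eq_mul, mul_one, Complex.sub_re, Complex.ofReal_re, hp, ContinuousMap.coe_mk]
        have h2 : (g x).re ≤ ‖g x‖ := Complex.re_le_norm (g x)
        have h3 : ‖g x‖ ≤ ‖f‖ := (hgnorm x) ▸ f.norm_coe_le_norm x
        linarith)
    have hlin : ν ((‖f‖ : ℂ) • (1 : C(Torus d, ℂ)) - p) = (‖f‖ : ℂ) * ν 1 - ν p := by
      rw [map_sub, ν.map_smul]; simp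
    rw [hlin] at hbound
    have hrebd : ‖f‖ * (ν 1).re - (ν p).re ≥ 0 := by
      have := hbound.2
      simpa [Complex.sub_re, Complex.mul_re, Complex.ofReal_re, Complex.ofReal_im] using this
    calc ‖c‖ = (ν p).re := hre
      _ ≤ ‖f‖ * (ν 1).re := by linarith
      _ = (ν 1).re * ‖f‖ := mul_comm _ _

end Aux

/-- **Proposition 2.6.** If `n ∈ Λ` and there is a positive measure `ν` with
`ν̂(m) = μ̂(m+n)` for all `m ∈ Λ − n`, then `n ∈ Γ(μ,Λ)` and the modulation `M_n ν` is a
minimal extrapolation of `μ` from `Λ`. -/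
theorem modulate_posDef_extension_isMinimalExtrapolation {d : ℕ} (μ : TorusMeasure d)
    (Λ : Finset (Fin d → ℤ)) (n : Fin d → ℤ) (hn : n ∈ Λ) (ν : TorusMeasure d)
    (hpos : IsPositiveMeasure ν)
    (hext : ∀ m : Fin d → ℤ, m + n ∈ Λ → mFourierCoeff ν m = mFourierCoeff μ (m + n)) :
    n ∈ gammaSet μ Λ ∧ IsMinimalExtrapolation μ Λ (modulateM n ν) := by
  classical
  have h1 := hpos 1 (fun x => by simp)
  -- ν 1 = μ̂(n)
  have hν1 : ν 1 = mFourierCoeff μ n := by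
    have h0 := hext 0 (by simpa using hn)
    simpa [mFourierCoeff, neg_zero, torusChar_zero] using h0
  have hnormμn : ‖mFourierCoeff μ n‖ = (ν 1).re := by
    rw [← hν1]
    obtain ⟨r, hr⟩ : ∃ r : ℝ, ν 1 = (r : ℂ) := ⟨(ν 1).re, Complex.ext rfl (by simp [h1.1])⟩
    have hr0 : 0 ≤ r := by have := h1.2; rw [hr] at this; simpa using this
    rw [hr]
    simp only [Complex.norm_real, Complex.ofReal_re]
    exact Real.norm_of_nonneg hr0
  -- M_n ν is an extrapolation
  have hmod_apply : ∀ f : C(Torus d, ℂ), (modulateM n ν) f = ν (torusChar n * f) :=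
    fun f => rfl
  have hMext : IsExtrapolation μ Λ (modulateM n ν) := by
    intro m hm
    have key : mFourierCoeff (modulateM n ν) m = mFourierCoeff ν (m - n) := by
      rw [mFourierCoeff, hmod_apply, torusChar_mul]
      congr 2
      ext i
      simp only [Pi.add_apply, Pi.neg_apply, Pi.sub_apply]
      omega
    rw [key, hext (m - n) (by simpa using hm)]
    congr 1
    simp
  -- norm bound for the modulation
  have hMnorm_le : ‖modulateM n ν‖ ≤ (ν 1).re := by
    refine ContinuousLinearMap.opNorm_le_bound _ h1.2 fun f => ?_
    rw [hmod_apply]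
    calc ‖ν (torusChar n * f)‖ ≤ (ν 1).re * ‖torusChar n * f‖ := pos_bound hpos _
      _ ≤ (ν 1).re * ‖f‖ := by
          refine mul_le_mul_of_nonneg_left ?_ h1.2
          refine (ContinuousMap.norm_le _ (norm_nonneg f)).mpr fun x => ?_
          rw [ContinuousMap.mul_apply, norm_mul, torusChar_norm_apply, one_mul]
          exact f.norm_coe_le_norm x
  -- lower bound for any extrapolation
  have hlb : ∀ σ : TorusMeasure d, IsExtrapolation μ Λ σ → ‖mFourierCoeff μ n‖ ≤ ‖σ‖ := by
    intro σ hσ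
    rw [← hσ n hn, mFourierCoeff]
    calc ‖σ (torusChar (-n))‖ ≤ ‖σ‖ * ‖torusChar (-n)‖ := σ.le_opNorm _
      _ ≤ ‖σ‖ * 1 := mul_le_mul_of_nonneg_left (torusChar_norm_le _) (norm_nonneg σ)
      _ = ‖σ‖ := mul_one _
  set S := ((fun ν => ‖ν‖) '' {ν | IsExtrapolation μ Λ ν}) with hS
  have hSne : S.Nonempty := ⟨‖modulateM n ν‖, ⟨modulateM n ν, hMext, rfl⟩⟩
  have hSlb : ∀ a ∈ S, ‖mFourierCoeff μ n‖ ≤ a := by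
    rintro a ⟨σ, hσ, rfl⟩
    exact hlb σ hσ
  have hε_ge : ‖mFourierCoeff μ n‖ ≤ minExtNorm μ Λ := le_csInf hSne hSlb
  have hε_le : minExtNorm μ Λ ≤ ‖modulateM n ν‖ :=
    csInf_le ⟨‖mFourierCoeff μ n‖, hSlb⟩ ⟨modulateM n ν, hMext, rfl⟩
  have hkey : ‖modulateM n ν‖ ≤ ‖mFourierCoeff μ n‖ := by
    rw [hnormμn]; exact hMnorm_le
  have heq1 : ‖mFourierCoeff μ n‖ = minExtNorm μ Λ :=
    le_antisymm hε_ge (hε_le.trans hkey)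
  have heq2 : ‖modulateM n ν‖ = minExtNorm μ Λ :=
    le_antisymm (hkey.trans hε_ge) hε_le
  exact ⟨⟨hn, heq1⟩, hMext, heq2⟩


end
end
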